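/- Let c > 0 and λ ∈ ℝ. Suppose w_B : [0, x_B*) → ℝ is differentiable with w_B′(x) = f_λ^c(w_B(x)), w_B(0) = 0, where 0 < x_B* < ∞ and w_B(x) → +∞ as x → x_B* from the left; and suppose w_F : [0, x_F*) → ℝ is differentiable with w_F′(x) = f_λ^{−c}(w_F(x)), w_F(0) = 0, where 0 < x_F* < ∞ and w_F(x) → +∞ as x → x_F* from the left. Then the blow-up times satisfy the strict inequality x_F* > x_B*. -/

import Mathlib

open Set Filter Topology

/-- The right-hand side f_λ^c(z) of the traveling-wave ODE:
f_λ^c(z) = (c/√(1+z²) − Φ(c/√(1+z²)) + λ)·(1+z²)^{3/2}. -/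
noncomputable def fODE (Φ : ℝ → ℝ) (c lam z : ℝ) : ℝ :=
  (c / Real.sqrt (1 + z ^ 2) - Φ (c / Real.sqrt (1 + z ^ 2)) + lam) *
    (1 + z ^ 2) ^ ((3 : ℝ) / 2)

/-- Strict pointwise comparison of the two right-hand sides. -/
lemma fODE_strict_lt (Φ : ℝ → ℝ) (J : ℝ) (hJ1 : J < 1)
    (hΦlip : ∀ a b : ℝ, |Φ a - Φ b| ≤ J * |a - b|)
    (c lam : ℝ) (hc : 0 < c) (z : ℝ) :
    fODE Φ (-c) lam z < fODE Φ c lam z := by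
  have h1 : (0:ℝ) < 1 + z ^ 2 := by positivity
  have hr : 0 < Real.sqrt (1 + z ^ 2) := Real.sqrt_pos.2 h1
  set V := c / Real.sqrt (1 + z ^ 2) with hV
  have hVpos : 0 < V := div_pos hc hr
  have hneg : -c / Real.sqrt (1 + z ^ 2) = -V := by rw [hV]; ring
  have hlip := hΦlip V (-V)
  have habs : |V - -V| = 2 * V := by rw [abs_of_pos (by linarith)]; ring
  have h2 : Φ V - Φ (-V) ≤ J * (2 * V) := by
    have := (abs_le.1 hlip).2
    rwa [habs] at this
  have hJV : J * (2 * V) < 2 * V := by nlinarith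
  have hfac : (0:ℝ) < (1 + z ^ 2) ^ ((3:ℝ)/2) := Real.rpow_pos_of_pos h1 _
  unfold fODE
  rw [hneg]
  apply mul_lt_mul_of_pos_right _ hfac
  linarith

/-- comparison of blow-up times. If w_B solves w′ = f_λ^c(w),
w(0) = 0 and blows up to +∞ at x_B* < ∞, while w_F solves w′ = f_λ^{−c}(w),
w(0) = 0 and blows up to +∞ at x_F* < ∞ (c > 0), then x_F* > x_B*. -/
theorem stmt16 (Φ : ℝ → ℝ) (J : ℝ) (hJ0 : 0 ≤ J) (hJ1 : J < 1)
    (hΦlip : ∀ a b : ℝ, |Φ a - Φ b| ≤ J * |a - b|)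
    (hΦbd : ∃ B : ℝ, ∀ x : ℝ, |Φ x| ≤ B)
    (c lam : ℝ) (hc : 0 < c)
    (xB xF : ℝ) (hxB : 0 < xB) (hxF : 0 < xF)
    (wB wF : ℝ → ℝ)
    (hwB : ∀ x ∈ Ico (0:ℝ) xB,
      HasDerivWithinAt wB (fODE Φ c lam (wB x)) (Ico (0:ℝ) xB) x)
    (hB0 : wB 0 = 0)
    (hBblow : Tendsto wB (nhdsWithin xB (Iio xB)) atTop)
    (hwF : ∀ x ∈ Ico (0:ℝ) xF,
      HasDerivWithinAt wF (fODE Φ (-c) lam (wF x)) (Ico (0:ℝ) xF) x)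
    (hF0 : wF 0 = 0)
    (hFblow : Tendsto wF (nhdsWithin xF (Iio xF)) atTop) :
    xB < xF := by
  by_contra hcon
  push_neg at hcon   -- hcon : xF ≤ xB
  have key : ∀ z, fODE Φ (-c) lam z < fODE Φ c lam z :=
    fODE_strict_lt Φ J hJ1 hΦlip c lam hc
  -- right derivatives
  have HF : ∀ x, 0 ≤ x → x < xF →
      HasDerivWithinAt wF (fODE Φ (-c) lam (wF x)) (Ici x) x := by
    intro x h0 h1
    refine (hwF x ⟨h0, h1⟩).mono_of_mem_nhdsWithin ?_
    have hmem : Ici x ∩ Iio xF ∈ 𝓝[Ici x] x :=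
      Filter.inter_mem self_mem_nhdsWithin
        (mem_nhdsWithin_of_mem_nhds (Iio_mem_nhds h1))
    exact Filter.mem_of_superset hmem fun y hy => ⟨le_trans h0 hy.1, hy.2⟩
  have HB : ∀ x, 0 ≤ x → x < xB →
      HasDerivWithinAt wB (fODE Φ c lam (wB x)) (Ici x) x := by
    intro x h0 h1
    refine (hwB x ⟨h0, h1⟩).mono_of_mem_nhdsWithin ?_
    have hmem : Ici x ∩ Iio xB ∈ 𝓝[Ici x] x :=
      Filter.inter_mem self_mem_nhdsWithin
        (mem_nhdsWithin_of_mem_nhds (Iio_mem_nhds h1))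
    exact Filter.mem_of_superset hmem fun y hy => ⟨le_trans h0 hy.1, hy.2⟩
  -- continuity
  have cF : ContinuousOn wF (Ico 0 xF) := fun x hx => (hwF x hx).continuousWithinAt
  have cB : ContinuousOn wB (Ico 0 xB) := fun x hx => (hwB x hx).continuousWithinAt
  -- weak comparison on [0, b] for b < xF
  have hcomp0 : ∀ b, 0 ≤ b → b < xF → ∀ x ∈ Icc (0:ℝ) b, wF x ≤ wB x := by
    intro b hb0 hb
    have hbB : b < xB := lt_of_lt_of_le hb hcon
    have hsubF : Icc (0:ℝ) b ⊆ Ico 0 xF := fun y hy => ⟨hy.1, lt_of_le_of_lt hy.2 hb⟩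
    have hsubB : Icc (0:ℝ) b ⊆ Ico 0 xB := fun y hy => ⟨hy.1, lt_of_le_of_lt hy.2 hbB⟩
    exact fun x hx =>
      image_le_of_deriv_right_lt_deriv_boundary' (cF.mono hsubF)
        (fun y hy => HF y hy.1 (lt_trans hy.2 hb))
        (by rw [hF0, hB0]) (cB.mono hsubB)
        (fun y hy => HB y hy.1 (lt_trans hy.2 hbB))
        (fun y hy heq => heq ▸ key (wF y)) hx
  -- choose x₁ ∈ (0, xF) with wF x₁ > 0
  have hIooF : Ioo 0 xF ∈ 𝓝[<] xF := by
    have : Ioi (0:ℝ) ∩ Iio xF ∈ 𝓝[<] xF :=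
      Filter.inter_mem (mem_nhdsWithin_of_mem_nhds (Ioi_mem_nhds hxF)) self_mem_nhdsWithin
    simpa [Ioi_inter_Iio] using this
  obtain ⟨x₁, hx₁pos, hx₁mem⟩ :=
    ((hFblow.eventually_gt_atTop 0).and (eventually_of_mem hIooF fun x hx => hx)).exists
  have hx₁F : x₁ < xF := hx₁mem.2
  have hx₁0 : 0 < x₁ := hx₁mem.1
  have hle1 : wF x₁ ≤ wB x₁ := hcomp0 x₁ (le_of_lt hx₁0) hx₁F x₁ ⟨le_of_lt hx₁0, le_refl _⟩
  -- strict comparison at x₁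
  have hstrict : wF x₁ < wB x₁ := by
    rcases lt_or_eq_of_le hle1 with h | h
    · exact h
    exfalso
    set D := fun y => wB y - wF y with hD
    set d := fODE Φ c lam (wB x₁) - fODE Φ (-c) lam (wF x₁) with hd
    have hdpos : 0 < d := by
      have := key (wF x₁)
      rw [hd, h]
      linarith [key (wB x₁)]
    have hDx : HasDerivWithinAt D d (Ico 0 xF) x₁ := by
      have h1 : HasDerivWithinAt wB (fODE Φ c lam (wB x₁)) (Ico 0 xF) x₁ :=
        (hwB x₁ ⟨le_of_lt hx₁0, lt_of_lt_of_le hx₁F hcon⟩).mono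
          (Ico_subset_Ico_right hcon)
      exact h1.sub (hwF x₁ ⟨le_of_lt hx₁0, hx₁F⟩)
    have hslope := hasDerivWithinAt_iff_tendsto_slope.1 hDx
    have hfle : 𝓝[<] x₁ ≤ 𝓝[Ico 0 xF \ {x₁}] x₁ := by
      apply nhdsWithin_le_of_mem
      have hIoo : Ioo 0 x₁ ∈ 𝓝[<] x₁ := by
        have : Ioi (0:ℝ) ∩ Iio x₁ ∈ 𝓝[<] x₁ :=
          Filter.inter_mem (mem_nhdsWithin_of_mem_nhds (Ioi_mem_nhds hx₁0))
            self_mem_nhdsWithin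
        simpa [Ioi_inter_Iio] using this
      exact Filter.mem_of_superset hIoo fun y hy =>
        ⟨⟨le_of_lt hy.1, lt_trans hy.2 hx₁F⟩, ne_of_lt hy.2⟩
    have hev : ∀ᶠ y in 𝓝[<] x₁, 0 < slope D x₁ y :=
      (hslope.mono_left hfle).eventually (eventually_gt_nhds hdpos)
    have hIoo : Ioo 0 x₁ ∈ 𝓝[<] x₁ := by
      have : Ioi (0:ℝ) ∩ Iio x₁ ∈ 𝓝[<] x₁ :=
        Filter.inter_mem (mem_nhdsWithin_of_mem_nhds (Ioi_mem_nhds hx₁0))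
          self_mem_nhdsWithin
      simpa [Ioi_inter_Iio] using this
    obtain ⟨y, hy1, hy2⟩ := (hev.and (eventually_of_mem hIoo fun x hx => hx)).exists
    have hsl : slope D x₁ y = (D y) / (y - x₁) := by
      rw [slope_def_field]
      have : D x₁ = 0 := by simp [hD, h]
      rw [this, sub_zero]
    have hDyneg : D y < 0 := by
      by_contra hge
      push_neg at hge
      have : D y / (y - x₁) ≤ 0 :=
        div_nonpos_of_nonneg_of_nonpos hge (by linarith [hy2.2])
      rw [hsl] at hy1
      linarith
    have := hcomp0 x₁ (le_of_lt hx₁0) hx₁F y ⟨le_of_lt hy2.1, le_of_lt hy2.2⟩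
    simp only [hD] at hDyneg
    linarith
  -- IVT: find x₂ < x₁ with wB x₂ = wF x₁
  have hsubB1 : Icc (0:ℝ) x₁ ⊆ Ico 0 xB := fun y hy =>
    ⟨hy.1, lt_of_le_of_lt hy.2 (lt_of_lt_of_le hx₁F hcon)⟩
  have hcontB1 : ContinuousOn wB (Icc 0 x₁) := cB.mono hsubB1
  obtain ⟨x₂, hx₂mem, hx₂⟩ :=
    intermediate_value_Icc (le_of_lt hx₁0) hcontB1
      (by rw [hB0]; exact ⟨le_of_lt hx₁pos, le_of_lt hstrict⟩)
  have hx₂lt : x₂ < x₁ := by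
    rcases lt_or_eq_of_le hx₂mem.2 with hlt | heq
    · exact hlt
    · rw [heq] at hx₂; exact absurd hx₂ (ne_of_gt hstrict)
  set ds := x₁ - x₂ with hds
  have hds0 : 0 < ds := by simp [hds]; linarith
  -- bound M for wB on Icc x₂ (xF - ds)
  have hKsub : Icc x₂ (xF - ds) ⊆ Ico 0 xB := fun y hy =>
    ⟨le_trans hx₂mem.1 hy.1, lt_of_le_of_lt hy.2 (by simp [hds]; linarith)⟩
  have hKne : (Icc x₂ (xF - ds)).Nonempty := ⟨x₂, le_refl _, by simp [hds]; linarith⟩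
  obtain ⟨zm, hzmem, hzmax⟩ :=
    isCompact_Icc.exists_isMaxOn hKne (cB.mono hKsub)
  set M := wB zm with hM
  -- shifted comparison: wF x ≤ wB (x - ds) ≤ M on [x₁, xF)
  have hbd : ∀ x, x₁ ≤ x → x < xF → wF x ≤ M := by
    intro x hxa hxb
    have hsubF : Icc x₁ x ⊆ Ico 0 xF := fun y hy =>
      ⟨le_trans (le_of_lt hx₁0) hy.1, lt_of_le_of_lt hy.2 hxb⟩
    have hvd : ∀ y ∈ Ico x₁ x, HasDerivWithinAt (fun y => wB (y - ds))
        (fODE Φ c lam (wB (y - ds))) (Ici y) y := by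
      intro y hy
      have h0 : 0 ≤ y - ds := by simp [hds]; linarith [hx₂mem.1, hy.1]
      have h1 : y - ds < xB := by
        have : y < xF := lt_trans hy.2 hxb
        simp [hds]; linarith
      have houter := HB (y - ds) h0 h1
      have hinner : HasDerivWithinAt (fun y : ℝ => y - ds) 1 (Ici y) y :=
        (hasDerivWithinAt_id y (Ici y)).sub_const ds
      have hmaps : MapsTo (fun y : ℝ => y - ds) (Ici y) (Ici (y - ds)) :=
        fun z hz => sub_le_sub_right hz ds
      simpa [Function.comp_def] using houter.comp y hinner hmaps
    have hvc : ContinuousOn (fun y => wB (y - ds)) (Icc x₁ x) := by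
      apply cB.comp ((continuous_id.sub continuous_const).continuousOn)
      intro y hy
      refine ⟨by simp [hds]; linarith [hx₂mem.1, hy.1], ?_⟩
      have : y < xF := lt_of_le_of_lt hy.2 hxb
      simp [hds]; linarith
    have hinit : wF x₁ ≤ wB (x₁ - ds) := by
      have : x₁ - ds = x₂ := by simp [hds]
      rw [this, hx₂]
    have hcmp := image_le_of_deriv_right_lt_deriv_boundary' (cF.mono hsubF)
      (fun y hy => HF y (le_trans (le_of_lt hx₁0) hy.1) (lt_trans hy.2 hxb))
      hinit hvc hvd
      (fun y hy heq => by rw [heq]; exact key (wB (y - ds)))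
      (x := x) ⟨hxa, le_refl x⟩
    calc wF x ≤ wB (x - ds) := hcmp
      _ ≤ M := hzmax ⟨by linarith, by linarith⟩
  -- final contradiction
  have hIooF2 : Ioo x₁ xF ∈ 𝓝[<] xF := by
    have : Ioi x₁ ∩ Iio xF ∈ 𝓝[<] xF :=
      Filter.inter_mem (mem_nhdsWithin_of_mem_nhds (Ioi_mem_nhds hx₁F)) self_mem_nhdsWithin
    simpa [Ioi_inter_Iio] using this
  obtain ⟨y, hy1, hy2⟩ :=
    ((hFblow.eventually_gt_atTop M).and (eventually_of_mem hIooF2 fun x hx => hx)).exists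
  exact absurd (hbd y (le_of_lt hy2.1) hy2.2) (not_le.2 hy1)
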